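/- Let H ∈ (1/2, 1). Then lim_{N→∞} S_N(H)/N^{2H} = 1/(2H(2H − 1)). Consequently, for any p ∈ (0,1) and c > 0, (N·p(1 − p) + 2·p·c·S_N(H))/N^{2H} → p·c/(H(2H − 1)) as N → ∞. -/

import Mathlib

open Filter

/-- `S_N(H) = Σ_{k=1}^{N−1} (N − k)·k^(2H−2)`. -/
noncomputable def S (N : ℕ) (H : ℝ) : ℝ :=
  ∑ k ∈ Finset.Icc 1 (N - 1), ((N : ℝ) - (k : ℕ)) * (k : ℝ) ^ (2 * H - 2)

section Aux

variable {H : ℝ}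

private lemma f_anti (hH1 : H < 1) (N : ℕ) :
    AntitoneOn (fun x : ℝ => ((N:ℝ) - x) * x ^ (2*H-2)) (Set.Icc (1:ℝ) N) := by
  intro x hx y hy hxy
  have hx0 : (0:ℝ) < x := by linarith [hx.1]
  dsimp only
  exact mul_le_mul (by linarith [hy.2]) (Real.rpow_le_rpow_of_nonpos hx0 hxy (by linarith))
    (Real.rpow_nonneg (by linarith [hy.1]) _) (by linarith [hx.2])

private lemma I_eq (hH0 : 1/2 < H) (N : ℕ) (hN : 1 ≤ N) :
    ∫ x in (1:ℝ)..(N:ℝ), ((N:ℝ) - x) * x ^ (2*H-2)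
      = (((N:ℝ)^(2*H) - (N:ℝ))/(2*H-1)) - (((N:ℝ)^(2*H) - 1)/(2*H)) := by
  have h1 : (-1:ℝ) < 2*H-2 := by linarith
  have h2 : (-1:ℝ) < 2*H-1 := by linarith
  have hN1 : (1:ℝ) ≤ (N:ℝ) := by exact_mod_cast hN
  have hN0 : (0:ℝ) < (N:ℝ) := by linarith
  have eA : (N:ℝ)^(2*H) = (N:ℝ) * (N:ℝ)^(2*H-1) := by
    rw [show (2*H : ℝ) = 1+(2*H-1) by ring, Real.rpow_add hN0, Real.rpow_one]
    congr 1
    ring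
  calc ∫ x in (1:ℝ)..(N:ℝ), ((N:ℝ) - x) * x ^ (2*H-2)
      = ∫ x in (1:ℝ)..(N:ℝ), ((N:ℝ) * x ^ (2*H-2) - x ^ (2*H-1)) := by
        apply intervalIntegral.integral_congr
        intro x hx
        rw [Set.uIcc_of_le hN1] at hx
        have hx0 : (0:ℝ) < x := by linarith [hx.1]
        have hx' : x ^ (2*H-1) = x * x ^ (2*H-2) := by
          rw [show 2*H-1 = 1 + (2*H-2) by ring, Real.rpow_add hx0, Real.rpow_one]
        dsimp only
        rw [hx']; ring
    _ = ((N:ℝ) * ∫ x in (1:ℝ)..(N:ℝ), x ^ (2*H-2)) - ∫ x in (1:ℝ)..(N:ℝ), x ^ (2*H-1) := by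
        rw [intervalIntegral.integral_sub
          ((intervalIntegral.intervalIntegrable_rpow' h1).const_mul _)
          (intervalIntegral.intervalIntegrable_rpow' h2),
          intervalIntegral.integral_const_mul]
    _ = (((N:ℝ)^(2*H) - (N:ℝ))/(2*H-1)) - (((N:ℝ)^(2*H) - 1)/(2*H)) := by
        rw [integral_rpow (Or.inl h1), integral_rpow (Or.inl h2),
          show 2*H-2+1 = 2*H-1 by ring, show 2*H-1+1 = 2*H by ring, Real.one_rpow]
        rw [eA]
        have h2H1 : (2*H-1) ≠ 0 := by linarith
        field_simp
        simp only [Real.one_rpow]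

private lemma lower_bound (hH0 : 1/2 < H) (hH1 : H < 1) (N : ℕ) (hN : 1 ≤ N) :
    (∫ x in (1:ℝ)..(N:ℝ), ((N:ℝ) - x) * x ^ (2*H-2)) ≤ S N H := by
  have h := AntitoneOn.integral_le_sum_Ico (f := fun x : ℝ => ((N:ℝ) - x) * x ^ (2*H-2))
    (a := 1) (b := N) hN (by exact_mod_cast f_anti hH1 N)
  have hIcc : Finset.Icc 1 (N-1) = Finset.Ico 1 N := by
    rw [← Finset.Ico_add_one_right_eq_Icc, Nat.sub_add_cancel hN]
  rw [S, hIcc]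
  simpa using h

private lemma upper_bound (hH0 : 1/2 < H) (hH1 : H < 1) (N : ℕ) (hN : 1 ≤ N) :
    S N H ≤ ((N:ℝ) - 1) + ∫ x in (1:ℝ)..(N:ℝ), ((N:ℝ) - x) * x ^ (2*H-2) := by
  set f : ℝ → ℝ := fun x : ℝ => ((N:ℝ) - x) * x ^ (2*H-2) with hf
  have hint : ((1:ℝ) + ((N-1:ℕ):ℝ)) = (N:ℝ) := by push_cast [Nat.cast_sub hN]; ring
  have hanti : AntitoneOn f (Set.Icc (1:ℝ) (1 + (N-1 : ℕ))) := by
    rw [hint]; exact f_anti hH1 N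
  have h := AntitoneOn.sum_le_integral (x₀ := 1) (a := N - 1) hanti
  rw [hint] at h
  have hS : S N H = ∑ i ∈ Finset.range (N-1), f ((1:ℝ) + (i:ℕ)) := by
    have hIcc : Finset.Icc 1 (N-1) = Finset.Ico 1 N := by
      rw [← Finset.Ico_add_one_right_eq_Icc, Nat.sub_add_cancel hN]
    rw [S, hIcc, Finset.sum_Ico_eq_sum_range]
    apply Finset.sum_congr rfl
    intro i _
    have : (((1+i : ℕ)):ℝ) = (1:ℝ) + (i:ℕ) := by push_cast; ring
    rw [hf]
    dsimp only
    rw [this]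
  have hnonneg : ∀ i : ℕ, i + 2 ≤ N → 0 ≤ f ((1:ℝ) + ((i+1:ℕ):ℝ)) := by
    intro i hi
    apply mul_nonneg _ (Real.rpow_nonneg (by positivity) _)
    have h2 : ((i:ℝ)) + 2 ≤ (N:ℝ) := by exact_mod_cast hi
    push_cast
    linarith
  rcases Nat.lt_or_ge N 2 with hN2 | hN2
  · interval_cases N
    have h0 : S 1 H = 0 := by simp [S]
    rw [h0]
    have h1 : (0:ℝ) ≤ ∫ x in (1:ℝ)..((1:ℕ):ℝ), f x := by norm_num
    push_cast at h1 ⊢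
    linarith
  · have hNm : N - 1 = (N - 2) + 1 := by omega
    rw [hS, hNm, Finset.sum_range_succ']
    have hf1 : f ((1:ℝ) + ((0:ℕ):ℝ)) = (N:ℝ) - 1 := by
      simp [hf, Real.one_rpow]
    rw [hf1]
    have step1 : ∑ i ∈ Finset.range (N-2), f ((1:ℝ) + ((i+1:ℕ):ℝ))
        ≤ ∑ i ∈ Finset.range (N-1), f ((1:ℝ) + ((i+1:ℕ):ℝ)) := by
      apply Finset.sum_le_sum_of_subset_of_nonneg
      · exact Finset.range_subset_range.2 (by omega)
      · intro i hi _
        exact hnonneg i (by have := Finset.mem_range.1 hi; omega)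
    have step2 : ∑ i ∈ Finset.range (N-1), f ((1:ℝ) + ((i+1:ℕ):ℝ))
        ≤ ∫ x in (1:ℝ)..(N:ℝ), f x := by
      simpa using h
    linarith [le_trans step1 step2]

end Aux

/-- For `H ∈ (1/2, 1)`, `S_N(H)/N^(2H) → 1/(2H(2H − 1))`, and consequently for
`p ∈ (0,1)` and `c > 0`,
`(N·p(1 − p) + 2·p·c·S_N(H))/N^(2H) → p·c/(H(2H − 1))`. -/
theorem S_fractional_growth (H : ℝ) (hH0 : 1 / 2 < H) (hH1 : H < 1) :
    Tendsto (fun N : ℕ => S N H / (N : ℝ) ^ (2 * H)) atTop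
      (nhds (1 / (2 * H * (2 * H - 1)))) ∧
    ∀ p c : ℝ, 0 < p → p < 1 → 0 < c →
      Tendsto
        (fun N : ℕ => ((N : ℝ) * (p * (1 - p)) + 2 * p * c * S N H) / (N : ℝ) ^ (2 * H))
        atTop (nhds (p * c / (H * (2 * H - 1)))) := by
  have hH2 : (0:ℝ) < 2*H - 1 := by linarith
  have hHpos : (0:ℝ) < H := by linarith
  have hcast : Tendsto (fun N : ℕ => (N:ℝ)) atTop atTop := tendsto_natCast_atTop_atTop
  have t1 : Tendsto (fun N : ℕ => (N:ℝ) ^ (1 - 2*H)) atTop (nhds 0) := by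
    have := (tendsto_rpow_neg_atTop hH2).comp hcast
    simpa [Function.comp_def, show -(2*H-1) = 1 - 2*H by ring] using this
  have t2 : Tendsto (fun N : ℕ => (N:ℝ) ^ (-(2*H))) atTop (nhds 0) :=
    (tendsto_rpow_neg_atTop (by linarith)).comp hcast
  -- rpow quotient facts
  have hrw : ∀ N : ℕ, 1 ≤ N →
      ((N:ℝ)^(1-2*H) = (N:ℝ)/(N:ℝ)^(2*H) ∧ (N:ℝ)^(-(2*H)) = 1/(N:ℝ)^(2*H)) := by
    intro N hN
    have hN0 : (0:ℝ) < (N:ℝ) := by exact_mod_cast hN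
    constructor
    · rw [show 1-2*H = 1 - 2*H from rfl, Real.rpow_sub hN0, Real.rpow_one]
    · rw [Real.rpow_neg hN0.le, one_div]
  have tlow : Tendsto (fun N : ℕ =>
      (1 - (N:ℝ)^(1-2*H))/(2*H-1) - (1 - (N:ℝ)^(-(2*H)))/(2*H)) atTop
      (nhds (1 / (2 * H * (2 * H - 1)))) := by
    have := (((tendsto_const_nhds (x := (1:ℝ))).sub t1).div_const (2*H-1)).sub
      (((tendsto_const_nhds (x := (1:ℝ))).sub t2).div_const (2*H))
    convert this using 2
    field_simp
    ring
  have tup : Tendsto (fun N : ℕ =>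
      ((N:ℝ)^(1-2*H) - (N:ℝ)^(-(2*H))) +
      ((1 - (N:ℝ)^(1-2*H))/(2*H-1) - (1 - (N:ℝ)^(-(2*H)))/(2*H))) atTop
      (nhds (1 / (2 * H * (2 * H - 1)))) := by
    have := (t1.sub t2).add tlow
    simpa using this
  have key : Tendsto (fun N : ℕ => S N H / (N : ℝ) ^ (2 * H)) atTop
      (nhds (1 / (2 * H * (2 * H - 1)))) := by
    apply tendsto_of_tendsto_of_tendsto_of_le_of_le' tlow tup
    · filter_upwards [eventually_ge_atTop 1] with N hN
      have hN0 : (0:ℝ) < N := by exact_mod_cast hN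
      have hNp : (0:ℝ) < (N:ℝ)^(2*H) := Real.rpow_pos_of_pos hN0 _
      have hb := lower_bound hH0 hH1 N hN
      rw [I_eq hH0 N hN] at hb
      obtain ⟨e1, e2⟩ := hrw N hN
      have heq : (1 - (N:ℝ)^(1-2*H))/(2*H-1) - (1 - (N:ℝ)^(-(2*H)))/(2*H)
          = ((((N:ℝ)^(2*H) - (N:ℝ))/(2*H-1)) - (((N:ℝ)^(2*H) - 1)/(2*H))) / (N:ℝ)^(2*H) := by
        rw [e1, e2]
        field_simp
      rw [heq]
      gcongr
    · filter_upwards [eventually_ge_atTop 1] with N hN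
      have hN0 : (0:ℝ) < N := by exact_mod_cast hN
      have hNp : (0:ℝ) < (N:ℝ)^(2*H) := Real.rpow_pos_of_pos hN0 _
      have hb := upper_bound hH0 hH1 N hN
      rw [I_eq hH0 N hN] at hb
      obtain ⟨e1, e2⟩ := hrw N hN
      have heq : ((N:ℝ)^(1-2*H) - (N:ℝ)^(-(2*H))) +
          ((1 - (N:ℝ)^(1-2*H))/(2*H-1) - (1 - (N:ℝ)^(-(2*H)))/(2*H))
          = (((N:ℝ) - 1) + ((((N:ℝ)^(2*H) - (N:ℝ))/(2*H-1)) - (((N:ℝ)^(2*H) - 1)/(2*H))))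
              / (N:ℝ)^(2*H) := by
        rw [e1, e2]
        field_simp
      rw [heq]
      gcongr
  refine ⟨key, ?_⟩
  intro p c hp hp1 hc
  have t3 : Tendsto (fun N : ℕ => p*(1-p) * (N:ℝ)^(1-2*H) + (2*p*c) * (S N H / (N:ℝ)^(2*H)))
      atTop (nhds (p*(1-p) * 0 + (2*p*c) * (1 / (2 * H * (2 * H - 1))))) :=
    (t1.const_mul _).add (key.const_mul _)
  have heq : ∀ᶠ N : ℕ in atTop,
      p*(1-p) * (N:ℝ)^(1-2*H) + (2*p*c) * (S N H / (N:ℝ)^(2*H))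
        = ((N : ℝ) * (p * (1 - p)) + 2 * p * c * S N H) / (N : ℝ) ^ (2 * H) := by
    filter_upwards [eventually_ge_atTop 1] with N hN
    have hN0 : (0:ℝ) < N := by exact_mod_cast hN
    have hNp : (0:ℝ) < (N:ℝ)^(2*H) := Real.rpow_pos_of_pos hN0 _
    obtain ⟨e1, _⟩ := hrw N hN
    rw [e1]
    field_simp
  have := Tendsto.congr' heq t3
  convert this using 2
  rw [mul_zero, zero_add]
  field_simp
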